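/- Let N, P, K, L ∈ ℕ with P ≤ N and L ≥ 2, let α ∈ (0,1], ρ > 0, L̄ = 1 + α(L−1), and let A ∈ ℂ^{N×P} satisfy A^H A = I_P. Fix indices j, m and define, for all k, R_{jjk} = (N/P) A A^H and R_{jlk} = α (N/P) A A^H for l ≠ j; for training SNR t > 0 define Q(t) = (t^{−1} I_N + L̄ (N/P) A A^H)^{−1} and Φ_{jlk}(t) = R_{jjk} Q(t) R_{jlk}. Then the limit as t → ∞ of γ̄^MF(t) = ((1/N) tr Φ_{jjm}(t))² / [ (1/(ρN²)) tr Φ_{jjm}(t) + (1/N) Σ_{l=1}^L Σ_{k=1}^K (1/N) tr(R_{jlk} Φ_{jjm}(t)) + Σ_{l≠j} |(1/N) tr Φ_{jlm}(t)|² ] exists and equals 1 / ( L̄/(ρN) + (K/P) L̄² + α(L̄ − 1) ). -/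

import Mathlib

open Matrix Filter

theorem invlem (N : ℕ) (M : Matrix (Fin N) (Fin N) ℂ) (hM : M * M = M)
    (t Lb c : ℝ) (ht : 0 < t) (hLb : 0 < Lb) (hc : 0 < c) :
    ((t : ℂ)⁻¹ • (1 : Matrix (Fin N) (Fin N) ℂ) + (Lb : ℂ) • (c : ℂ) • M)⁻¹
      = (t : ℂ) • 1 + ((((t⁻¹ + Lb * c)⁻¹ : ℝ) : ℂ) - (t : ℂ)) • M := by
  have ht' : (t : ℝ) ≠ 0 := ne_of_gt ht
  have htc : (t : ℂ) ≠ 0 := by exact_mod_cast ht'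
  have h1 : (1 + (t : ℂ) * Lb * c) ≠ 0 := by
    have h1' : (1 + t * Lb * c : ℝ) ≠ 0 := by positivity
    exact_mod_cast h1'
  have hdc : ((Lb : ℂ) * c + (t : ℂ)⁻¹) ≠ 0 := by
    have hd' : (Lb * c + t⁻¹ : ℝ) ≠ 0 := by positivity
    have := Complex.ofReal_ne_zero.mpr hd'
    push_cast at this
    exact this
  apply Matrix.inv_eq_right_inv
  simp only [Matrix.mul_add, Matrix.add_mul, Matrix.smul_mul, Matrix.mul_smul,
    Matrix.one_mul, Matrix.mul_one, hM, smul_smul]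
  match_scalars
  · field_simp
  · field_simp [htc, h1, hdc]
    linear_combination

theorem philem (N : ℕ) (M : Matrix (Fin N) (Fin N) ℂ) (hM : M * M = M)
    (a b tc σ : ℂ) :
    (a • M) * ((tc • 1 : Matrix (Fin N) (Fin N) ℂ) + (σ - tc) • M) * (b • M)
      = (a * σ * b) • M := by
  simp only [Matrix.mul_add, Matrix.add_mul, Matrix.smul_mul, Matrix.mul_smul,
    Matrix.one_mul, Matrix.mul_one, hM, smul_smul, Matrix.mul_assoc]
  match_scalars
  ring

theorem mullem (N : ℕ) (M : Matrix (Fin N) (Fin N) ℂ) (hM : M * M = M)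
    (a b : ℂ) : (a • M) * (b • M) = (a * b) • M := by
  simp only [Matrix.smul_mul, Matrix.mul_smul, hM, smul_smul, mul_comm]


/-- Closed form of the matched-filter deterministic-equivalent SINR
under the physical channel model (`A` with `P` orthonormal columns, intercell factor
`α`, `L̄ = 1 + α(L−1)`) in the perfect-training limit `t → ∞`:
`γ̄^MF(t) → 1/(L̄/(ρN) + (K/P)L̄² + α(L̄−1))`. -/
theorem stmt3
    (N P K L : ℕ) (hP : 0 < P) (hPN : P ≤ N) (hL : 2 ≤ L)
    (α : ℝ) (hα0 : 0 < α) (hα1 : α ≤ 1) (ρ : ℝ) (hρ : 0 < ρ)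
    (Lbar : ℝ) (hLbar : Lbar = 1 + α * (L - 1))
    (A : Matrix (Fin N) (Fin P) ℂ) (hA : Aᴴ * A = 1)
    (j : Fin L) (m : Fin K)
    (R : Fin L → Matrix (Fin N) (Fin N) ℂ)
    (hRj : R j = ((N : ℂ) / (P : ℂ)) • (A * Aᴴ))
    (hRl : ∀ l, l ≠ j → R l = (α : ℂ) • ((N : ℂ) / (P : ℂ)) • (A * Aᴴ))
    (Q : ℝ → Matrix (Fin N) (Fin N) ℂ)
    (hQ : ∀ t, Q t = (((t : ℂ))⁻¹ • (1 : Matrix (Fin N) (Fin N) ℂ)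
        + (Lbar : ℂ) • ((N : ℂ) / (P : ℂ)) • (A * Aᴴ))⁻¹)
    (Φ : ℝ → Fin L → Matrix (Fin N) (Fin N) ℂ)
    (hΦ : ∀ t l, Φ t l = R j * Q t * R l) :
    Tendsto (fun t : ℝ =>
      ((1 / (N : ℝ)) * (Matrix.trace (Φ t j)).re) ^ 2 /
        ((1 / (ρ * (N : ℝ) ^ 2)) * (Matrix.trace (Φ t j)).re
          + (1 / (N : ℝ)) * ∑ l, ∑ _k : Fin K,
              (1 / (N : ℝ)) * (Matrix.trace (R l * Φ t j)).re
          + ∑ l ∈ Finset.univ.erase j,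
              ‖(1 / (N : ℂ)) * Matrix.trace (Φ t l)‖ ^ 2))
      atTop
      (nhds (1 / (Lbar / (ρ * (N : ℝ)) + ((K : ℝ) / (P : ℝ)) * Lbar ^ 2
        + α * (Lbar - 1)))) := by
  have hN : 0 < N := lt_of_lt_of_le hP hPN
  have hN' : ((N : ℝ)) ≠ 0 := by positivity
  have hP' : ((P : ℝ)) ≠ 0 := by positivity
  have hL1 : (1 : ℝ) ≤ (L : ℝ) := by exact_mod_cast Nat.one_le_of_lt hL
  have hLb0 : 0 < Lbar := by rw [hLbar]; nlinarith
  set M : Matrix (Fin N) (Fin N) ℂ := A * Aᴴ with hMdef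
  have hM : M * M = M := by
    calc M * M = A * (Aᴴ * A) * Aᴴ := by simp only [hMdef, Matrix.mul_assoc]
    _ = M := by rw [hA, Matrix.mul_one]
  have htrM : Matrix.trace M = (P : ℂ) := by
    rw [hMdef, Matrix.trace_mul_comm, hA, Matrix.trace_one]
    simp
  set cR : ℝ := (N : ℝ) / (P : ℝ) with hcRdef
  have hcR : 0 < cR := by positivity
  have hcast : ((N : ℂ) / (P : ℂ)) = ((cR : ℝ) : ℂ) := by
    rw [hcRdef]; push_cast; ring
  -- the scalar function s(t) and the limit rational function F
  set s : ℝ → ℝ := fun t => (t⁻¹ + Lbar * cR)⁻¹ with hsdef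
  set F : ℝ → ℝ := fun x =>
    ((1/(N:ℝ)) * (cR^2 * x * P))^2 /
      ((1/(ρ*(N:ℝ)^2)) * (cR^2 * x * P)
        + (1/(N:ℝ)) * ((K:ℝ)*((1/(N:ℝ))*(cR*(cR^2*x)*P))
            + ((L:ℝ)-1) * ((K:ℝ)*((1/(N:ℝ))*(α*cR*(cR^2*x)*P))))
        + ((L:ℝ)-1) * ((1/(N:ℝ)) * (α*cR^2*x*P))^2) with hFdef
  have hs0 : (0:ℝ) < (Lbar * cR)⁻¹ := by positivity
  have hcomp : Tendsto s atTop (nhds ((Lbar * cR)⁻¹)) := by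
    have h1 : Tendsto (fun t : ℝ => t⁻¹ + Lbar * cR) atTop (nhds (0 + Lbar * cR)) :=
      tendsto_inv_atTop_zero.add tendsto_const_nhds
    rw [zero_add] at h1
    exact h1.inv₀ (by positivity)
  have hFden : 0 < (1/(ρ*(N:ℝ)^2)) * (cR^2 * ((Lbar*cR)⁻¹) * P)
        + (1/(N:ℝ)) * ((K:ℝ)*((1/(N:ℝ))*(cR*(cR^2*((Lbar*cR)⁻¹))*P))
            + ((L:ℝ)-1) * ((K:ℝ)*((1/(N:ℝ))*(α*cR*(cR^2*((Lbar*cR)⁻¹))*P))))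
        + ((L:ℝ)-1) * ((1/(N:ℝ)) * (α*cR^2*((Lbar*cR)⁻¹)*P))^2 := by
    have e1 : 0 < (1/(ρ*(N:ℝ)^2)) * (cR^2 * ((Lbar*cR)⁻¹) * P) := by positivity
    have e2 : 0 ≤ (1/(N:ℝ)) * ((K:ℝ)*((1/(N:ℝ))*(cR*(cR^2*((Lbar*cR)⁻¹))*P))
            + ((L:ℝ)-1) * ((K:ℝ)*((1/(N:ℝ))*(α*cR*(cR^2*((Lbar*cR)⁻¹))*P)))) := by
      have : (0:ℝ) ≤ (L:ℝ)-1 := by linarith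
      positivity
    have e3 : 0 ≤ ((L:ℝ)-1) * ((1/(N:ℝ)) * (α*cR^2*((Lbar*cR)⁻¹)*P))^2 := by
      have : (0:ℝ) ≤ (L:ℝ)-1 := by linarith
      positivity
    linarith
  have hFcont : ContinuousAt F ((Lbar * cR)⁻¹) := by
    rw [hFdef]
    exact ContinuousAt.div (by fun_prop) (by fun_prop) (ne_of_gt hFden)
  have htend : Tendsto (fun t => F (s t)) atTop (nhds (F ((Lbar * cR)⁻¹))) :=
    hFcont.tendsto.comp hcomp
  have hval : F ((Lbar * cR)⁻¹)
      = 1 / (Lbar / (ρ * (N : ℝ)) + ((K : ℝ) / (P : ℝ)) * Lbar ^ 2 + α * (Lbar - 1)) := by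
    have hkey : α * (Lbar - 1) = ((L:ℝ)-1) * α^2 := by rw [hLbar]; ring
    have htden : 0 < Lbar / (ρ * (N : ℝ)) + ((K : ℝ) / (P : ℝ)) * Lbar ^ 2
        + α * (Lbar - 1) := by
      have e1 : 0 < Lbar / (ρ * (N : ℝ)) := by positivity
      have e2 : 0 ≤ ((K : ℝ) / (P : ℝ)) * Lbar ^ 2 := by positivity
      have e3 : 0 ≤ α * (Lbar - 1) := by
        rw [hkey]
        have : (0:ℝ) ≤ (L:ℝ)-1 := by linarith
        positivity
      linarith
    have htden' := htden
    rw [hkey] at htden'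
    rw [hFdef]
    simp only
    rw [hkey, hcRdef]
    rw [div_eq_div_iff (by rw [hcRdef] at hFden; exact ne_of_gt hFden)
      (ne_of_gt htden')]
    field_simp
    linear_combination (Lbar * (N:ℝ) * ρ * (K:ℝ)) * hLbar
  rw [hval] at htend
  apply Tendsto.congr' _ htend
  filter_upwards [eventually_gt_atTop (0:ℝ)] with t ht
  -- now compute all the traces at this fixed t
  have hQt : Q t = (t : ℂ) • 1 + (((s t : ℝ) : ℂ) - (t : ℂ)) • M := by
    rw [hQ, hcast, hsdef]
    exact invlem N M hM t Lbar cR ht hLb0 hcR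
  have hst : 0 < s t := by rw [hsdef]; positivity
  have hΦj : Φ t j = (((cR * s t * cR : ℝ) : ℂ)) • M := by
    rw [hΦ, hRj, hQt, hcast, philem N M hM]
    congr 1
    push_cast
    ring
  have hΦl : ∀ l, l ≠ j → Φ t l = (((cR * s t * (α * cR) : ℝ) : ℂ)) • M := by
    intro l hl
    rw [hΦ, hRl l hl, hRj, hQt, hcast, smul_smul, philem N M hM]
    congr 1
    push_cast
    ring
  have htre : ∀ x : ℝ, (Matrix.trace (((x : ℝ) : ℂ) • M)).re = x * P := by
    intro x
    rw [Matrix.trace_smul, htrM]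
    have : ((x : ℝ) : ℂ) • (P : ℂ) = ((x * P : ℝ) : ℂ) := by push_cast; simp [smul_eq_mul]
    rw [this, Complex.ofReal_re]
  have e1 : (Matrix.trace (Φ t j)).re = cR * s t * cR * P := by rw [hΦj, htre]
  have e2 : (Matrix.trace (R j * Φ t j)).re = cR * (cR * s t * cR) * P := by
    rw [hΦj, hRj, hcast, mullem N M hM]
    have : ((cR : ℝ) : ℂ) * ((cR * s t * cR : ℝ) : ℂ) = ((cR * (cR * s t * cR) : ℝ) : ℂ) := by
      push_cast; ring
    rw [this, htre]
  have e3 : ∀ l, l ≠ j → (Matrix.trace (R l * Φ t j)).re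
      = α * cR * (cR * s t * cR) * P := by
    intro l hl
    rw [hΦj, hRl l hl, hcast, smul_smul, mullem N M hM]
    have : ((α : ℝ) : ℂ) * ((cR : ℝ) : ℂ) * ((cR * s t * cR : ℝ) : ℂ)
        = ((α * cR * (cR * s t * cR) : ℝ) : ℂ) := by push_cast; ring
    rw [this, htre]
  -- sums
  have S1 : (∑ l, ∑ _k : Fin K, (1 / (N : ℝ)) * (Matrix.trace (R l * Φ t j)).re)
      = (K:ℝ) * ((1/(N:ℝ)) * (cR * (cR * s t * cR) * P))
        + ((L:ℝ)-1) * ((K:ℝ) * ((1/(N:ℝ)) * (α * cR * (cR * s t * cR) * P))) := by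
    rw [← Finset.add_sum_erase _ _ (Finset.mem_univ j)]
    congr 1
    · rw [e2]
      simp [Finset.sum_const, mul_comm]
    · rw [Finset.sum_congr rfl (fun l hl => by
        rw [Finset.sum_congr rfl (fun (k : Fin K) _ => by
          rw [e3 l (Finset.ne_of_mem_erase hl)])])]
      simp only [Finset.sum_const, Finset.card_univ, Fintype.card_fin, smul_eq_mul,
        nsmul_eq_mul, Finset.card_erase_of_mem (Finset.mem_univ j)]
      rw [Nat.cast_sub (by omega : 1 ≤ L), Nat.cast_one]
  have S2 : (∑ l ∈ Finset.univ.erase j,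
        ‖(1 / (N : ℂ)) * Matrix.trace (Φ t l)‖ ^ 2)
      = ((L:ℝ)-1) * ((1/(N:ℝ)) * (cR * s t * (α * cR) * P))^2 := by
    rw [Finset.sum_congr rfl (fun l hl => by
      rw [hΦl l (Finset.ne_of_mem_erase hl)])]
    have habs : ∀ l : Fin L, ‖(1 / (N : ℂ)) *
        Matrix.trace ((((cR * s t * (α * cR) : ℝ) : ℂ)) • M)‖ ^ 2
        = ((1/(N:ℝ)) * (cR * s t * (α * cR) * P))^2 := by
      intro l
      rw [Matrix.trace_smul, htrM]
      have : (1 / (N : ℂ)) * (((cR * s t * (α * cR) : ℝ) : ℂ) • (P : ℂ))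
          = (((1/(N:ℝ)) * (cR * s t * (α * cR) * P) : ℝ) : ℂ) := by
        simp only [smul_eq_mul]
        push_cast
        ring
      rw [this, Complex.norm_real, Real.norm_eq_abs, sq_abs]
    rw [Finset.sum_congr rfl (fun l _ => habs l)]
    simp only [Finset.sum_const, smul_eq_mul, nsmul_eq_mul,
      Finset.card_erase_of_mem (Finset.mem_univ j), Finset.card_univ, Fintype.card_fin]
    rw [Nat.cast_sub (by omega : 1 ≤ L), Nat.cast_one]
  rw [e1, S1, S2, hFdef]
  simp only
  ring
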